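/- The converse of the Versmissen translation fails: the sequent [ []⁻¹p ], [ []⁻¹q ] → ⟨⟩[]⁻¹(p·q) is not derivable in Lb*, while its translation r, r\p/s, s, r, r\q/s, s → r·(r\(p·q)/s)·s is derivable in L*. -/
import Mathlib


/-- Formulas of the Lambek calculus with brackets `Lb*`. -/
inductive Fm where
  | var : ℕ → Fm
  | mul : Fm → Fm → Fm        -- A · B
  | ldiv : Fm → Fm → Fm       -- A \ B
  | rdiv : Fm → Fm → Fm       -- B / A   (rdiv B A)
  | dia : Fm → Fm             -- ⟨⟩A
  | box : Fm → Fm             -- []⁻¹A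

/-- Items of a configuration: formulas or bracketed configurations. -/
inductive Item where
  | fml : Fm → Item
  | brk : List Item → Item

/-- Configurations (bracketed antecedents): sequences of items. -/
abbrev Cfg := List Item

/-- Configuration contexts: a configuration with a hole, possibly nested
inside brackets. -/
inductive Ctx where
  | top : Cfg → Cfg → Ctx
  | nest : Cfg → Ctx → Cfg → Ctx

/-- Plugging a configuration into the hole of a context. -/
def plug : Ctx → Cfg → Cfg
  | .top pre post, Γ => pre ++ Γ ++ post
  | .nest pre c post, Γ => pre ++ [Item.brk (plug c Γ)] ++ post

/-- Derivability in `Lb*` (the Lambek calculus with brackets, allowing empty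
antecedents). -/
inductive DerLb : Cfg → Fm → Prop where
  | ax (p : ℕ) : DerLb [.fml (.var p)] (.var p)
  | ldivL (Δ : Ctx) (Pi : Cfg) (A B C : Fm) :
      DerLb Pi A → DerLb (plug Δ [.fml B]) C →
      DerLb (plug Δ (Pi ++ [.fml (.ldiv A B)])) C
  | ldivR (Pi : Cfg) (A B : Fm) :
      DerLb (.fml A :: Pi) B → DerLb Pi (.ldiv A B)
  | rdivL (Δ : Ctx) (Pi : Cfg) (A B C : Fm) :
      DerLb Pi A → DerLb (plug Δ [.fml B]) C →
      DerLb (plug Δ (.fml (.rdiv B A) :: Pi)) C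
  | rdivR (Pi : Cfg) (A B : Fm) :
      DerLb (Pi ++ [.fml A]) B → DerLb Pi (.rdiv B A)
  | mulL (Δ : Ctx) (A B C : Fm) :
      DerLb (plug Δ [.fml A, .fml B]) C → DerLb (plug Δ [.fml (.mul A B)]) C
  | mulR (Γ Δ : Cfg) (A B : Fm) :
      DerLb Γ A → DerLb Δ B → DerLb (Γ ++ Δ) (.mul A B)
  | diaL (Δ : Ctx) (A C : Fm) :
      DerLb (plug Δ [.brk [.fml A]]) C → DerLb (plug Δ [.fml (.dia A)]) C
  | diaR (Pi : Cfg) (A : Fm) :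
      DerLb Pi A → DerLb [.brk Pi] (.dia A)
  | boxL (Δ : Ctx) (A C : Fm) :
      DerLb (plug Δ [.fml A]) C → DerLb (plug Δ [.brk [.fml (.box A)]]) C
  | boxR (Pi : Cfg) (A : Fm) :
      DerLb [.brk Pi] A → DerLb Pi (.box A)

/-- Formulas of the plain Lambek calculus `L*` (no bracket modalities). -/
inductive PF where
  | var : ℕ → PF
  | mul : PF → PF → PF        -- A · B
  | ldiv : PF → PF → PF       -- A \ B
  | rdiv : PF → PF → PF       -- B / A   (rdiv B A)

/-- Derivability in `L*` (the Lambek calculus allowing empty antecedents). -/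
inductive DerL : List PF → PF → Prop where
  | ax (p : ℕ) : DerL [.var p] (.var p)
  | ldivL (Δ₁ Δ₂ Pi : List PF) (A B C : PF) :
      DerL Pi A → DerL (Δ₁ ++ [B] ++ Δ₂) C →
      DerL (Δ₁ ++ Pi ++ [.ldiv A B] ++ Δ₂) C
  | ldivR (Pi : List PF) (A B : PF) :
      DerL (A :: Pi) B → DerL Pi (.ldiv A B)
  | rdivL (Δ₁ Δ₂ Pi : List PF) (A B C : PF) :
      DerL Pi A → DerL (Δ₁ ++ [B] ++ Δ₂) C →
      DerL (Δ₁ ++ [.rdiv B A] ++ Pi ++ Δ₂) C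
  | rdivR (Pi : List PF) (A B : PF) :
      DerL (Pi ++ [A]) B → DerL Pi (.rdiv B A)
  | mulL (Δ₁ Δ₂ : List PF) (A B C : PF) :
      DerL (Δ₁ ++ [A, B] ++ Δ₂) C → DerL (Δ₁ ++ [.mul A B] ++ Δ₂) C
  | mulR (Γ Δ : List PF) (A B : PF) :
      DerL Γ A → DerL Δ B → DerL (Γ ++ Δ) (.mul A B)

/-- The fresh variable `r` (fresh since translated variables are shifted
by 2). -/
def rV : PF := .var 0
/-- The fresh variable `s`. -/
def sV : PF := .var 1

/-- The Versmissen-style translation on formulas: `tr(p_i) = p_i` (shifted to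
keep `r`, `s` fresh), `tr` commutes with `\`, `/`, `·`, `tr(⟨⟩A) = r·tr(A)·s`,
`tr([]⁻¹A) = r\tr(A)/s`. -/
def trF : Fm → PF
  | .var i => .var (i + 2)
  | .mul A B => .mul (trF A) (trF B)
  | .ldiv A B => .ldiv (trF A) (trF B)
  | .rdiv B A => .rdiv (trF B) (trF A)
  | .dia A => .mul (.mul rV (trF A)) sV
  | .box A => .ldiv rV (.rdiv (trF A) sV)

mutual
/-- Translation of an item: `tr([Γ]) = r, tr(Γ), s`. -/
def trI : Item → List PF
  | .fml A => [trF A]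
  | .brk Γ => rV :: (trC Γ ++ [sV])
/-- Translation of a configuration. -/
def trC : Cfg → List PF
  | [] => []
  | x :: xs => trI x ++ trC xs
end


/-- Items allowed in the antecedents analyzed in the counterexample. -/
inductive OkI : Item → Prop
  | var (n : ℕ) : OkI (.fml (.var n))
  | box (n : ℕ) : OkI (.brk [.fml (.box (.var n))])

lemma okI_brk {L : Cfg} (h : OkI (Item.brk L)) :
    ∃ n, L = [Item.fml (.box (.var n))] := by
  cases h; exact ⟨_, rfl⟩

lemma plug_singleton (c : Ctx) (X : Cfg) (f : Fm)
    (h : plug c X = [Item.fml f]) : ∀ e ∈ X, e = Item.fml f := by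
  cases c with
  | top pre post =>
    intro e he
    have : e ∈ pre ++ X ++ post := by
      simp only [List.mem_append]; exact Or.inl (Or.inr he)
    rw [show pre ++ X ++ post = plug (Ctx.top pre post) X from rfl, h] at this
    simpa using this
  | nest pre c post =>
    intro e he
    have hm : Item.brk (plug c X) ∈ pre ++ [Item.brk (plug c X)] ++ post := by
      simp
    rw [show pre ++ [Item.brk (plug c X)] ++ post
        = plug (Ctx.nest pre c post) X from rfl, h] at hm
    simp at hm

lemma plug_ok (Δ : Ctx) (X : Cfg) (h : ∀ i ∈ plug Δ X, OkI i) :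
    (∀ e ∈ X, OkI e) ∨ (∀ e ∈ X, ∃ n, e = Item.fml (.box (.var n))) := by
  cases Δ with
  | top pre post =>
    left; intro e he
    exact h e (by simp only [plug, List.mem_append]; exact Or.inl (Or.inr he))
  | nest pre c post =>
    right
    have hm : OkI (Item.brk (plug c X)) := by
      apply h; simp [plug]
    obtain ⟨n, hn⟩ := okI_brk hm
    intro e he
    exact ⟨n, plug_singleton c X _ hn e he⟩

lemma not_derLb : ∀ (Γ : Cfg) (C : Fm), DerLb Γ C →
    ∀ A : Fm, C = Fm.dia A → Γ.length = 2 → (∀ i ∈ Γ, OkI i) → False := by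
  intro Γ C h
  induction h with
  | ax p => intro A hC _ _; exact Fm.noConfusion hC
  | ldivL Δ Pi A B C h1 h2 ih1 ih2 =>
    intro A' hC hlen hok
    rcases plug_ok Δ _ hok with hk | hk
    · have := hk (Item.fml (.ldiv A B)) (by simp)
      cases this
    · rcases hk (Item.fml (.ldiv A B)) (by simp) with ⟨n, hn⟩
      exact Fm.noConfusion (Item.fml.inj hn)
  | rdivL Δ Pi A B C h1 h2 ih1 ih2 =>
    intro A' hC hlen hok
    rcases plug_ok Δ _ hok with hk | hk
    · have := hk (Item.fml (.rdiv B A)) (by simp)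
      cases this
    · rcases hk (Item.fml (.rdiv B A)) (by simp) with ⟨n, hn⟩
      exact Fm.noConfusion (Item.fml.inj hn)
  | mulL Δ A B C h1 ih1 =>
    intro A' hC hlen hok
    rcases plug_ok Δ _ hok with hk | hk
    · have := hk (Item.fml (.mul A B)) (by simp)
      cases this
    · rcases hk (Item.fml (.mul A B)) (by simp) with ⟨n, hn⟩
      exact Fm.noConfusion (Item.fml.inj hn)
  | diaL Δ A C h1 ih1 =>
    intro A' hC hlen hok
    rcases plug_ok Δ _ hok with hk | hk
    · have := hk (Item.fml (.dia A)) (by simp)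
      cases this
    · rcases hk (Item.fml (.dia A)) (by simp) with ⟨n, hn⟩
      exact Fm.noConfusion (Item.fml.inj hn)
  | ldivR Pi A B h1 ih1 => intro A' hC _ _; exact Fm.noConfusion hC
  | rdivR Pi A B h1 ih1 => intro A' hC _ _; exact Fm.noConfusion hC
  | mulR Γ Δ A B h1 h2 ih1 ih2 => intro A' hC _ _; exact Fm.noConfusion hC
  | boxR Pi A h1 ih1 => intro A' hC _ _; exact Fm.noConfusion hC
  | diaR Pi A h1 ih1 => intro A' hC hlen _; simp at hlen
  | boxL Δ A C h1 ih1 =>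
    intro A' hC hlen hok
    -- first pin down A = var n
    have hA : ∃ n, A = Fm.var n := by
      rcases plug_ok Δ _ hok with hk | hk
      · obtain ⟨n, hn⟩ := okI_brk (hk (Item.brk [Item.fml (.box A)]) (by simp))
        have := List.head_eq_of_cons_eq hn
        exact ⟨n, Fm.box.inj (Item.fml.inj this)⟩
      · rcases hk (Item.brk [Item.fml (.box A)]) (by simp) with ⟨n, hn⟩
        exact Item.noConfusion hn
    rcases hA with ⟨n, rfl⟩
    cases Δ with
    | top pre post =>
      apply ih1 A' hC
      · have := hlen
        simp only [plug, List.length_append, List.length_cons,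
          List.length_nil] at this ⊢
        omega
      · intro i hi
        simp only [plug, List.mem_append] at hi hok
        rcases hi with (hi | hi) | hi
        · exact hok i (Or.inl (Or.inl hi))
        · simp at hi; subst hi; exact OkI.var n
        · exact hok i (Or.inr hi)
    | nest pre c post =>
      have hm : OkI (Item.brk (plug c [Item.brk [Item.fml (.box (.var n))]])) := by
        apply hok; simp [plug]
      obtain ⟨m, hmn⟩ := okI_brk hm
      have := plug_singleton c _ _ hmn
        (Item.brk [Item.fml (.box (.var n))]) (by simp)
      exact Item.noConfusion this

/-- The counter-example to the converse of the Versmissen translation: the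
sequent `[[]⁻¹p], [[]⁻¹q] → ⟨⟩[]⁻¹(p·q)` is not derivable in `Lb*`, while its
translation `r, r\p/s, s, r, r\q/s, s → r·(r\(p·q)/s)·s` is derivable
in `L*`. -/
theorem stmt13 (p q : ℕ) :
    ¬ DerLb [Item.brk [.fml (.box (.var p))], Item.brk [.fml (.box (.var q))]]
        (Fm.dia (.box (.mul (.var p) (.var q)))) ∧
    DerL (trC [Item.brk [.fml (.box (.var p))], Item.brk [.fml (.box (.var q))]])
        (trF (Fm.dia (.box (.mul (.var p) (.var q))))) := by
  constructor
  · intro h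
    apply not_derLb _ _ h _ rfl rfl
    intro i hi
    simp at hi
    rcases hi with rfl | rfl
    · exact OkI.box p
    · exact OkI.box q
  · simp only [trC, trI, trF, List.append_nil, List.cons_append, List.nil_append]
    set P : PF := .var (p + 2)
    set Q : PF := .var (q + 2)
    have d1 : DerL [P, Q] (.mul P Q) := DerL.mulR [P] [Q] P Q (.ax _) (.ax _)
    have d2 : DerL [P, .rdiv Q sV, sV] (.mul P Q) :=
      DerL.rdivL [P] [] [sV] sV Q _ (.ax 1) d1
    have d3 : DerL [P, rV, .ldiv rV (.rdiv Q sV), sV] (.mul P Q) :=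
      DerL.ldivL [P] [sV] [rV] rV (.rdiv Q sV) _ (.ax 0) d2
    have d4 : DerL [.rdiv P sV, sV, rV, .ldiv rV (.rdiv Q sV), sV] (.mul P Q) :=
      DerL.rdivL [] [rV, .ldiv rV (.rdiv Q sV), sV] [sV] sV P _ (.ax 1) d3
    have d5 : DerL [rV, .ldiv rV (.rdiv P sV), sV, rV, .ldiv rV (.rdiv Q sV), sV]
        (.mul P Q) :=
      DerL.ldivL [] [sV, rV, .ldiv rV (.rdiv Q sV), sV] [rV] rV (.rdiv P sV) _
        (.ax 0) d4
    have d6 : DerL [rV, .ldiv rV (.rdiv P sV), sV, rV, .ldiv rV (.rdiv Q sV)]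
        (.rdiv (.mul P Q) sV) := DerL.rdivR _ _ _ d5
    have d7 : DerL [.ldiv rV (.rdiv P sV), sV, rV, .ldiv rV (.rdiv Q sV)]
        (.ldiv rV (.rdiv (.mul P Q) sV)) := DerL.ldivR _ _ _ d6
    have d8 := DerL.mulR [rV] _ _ _ (DerL.ax 0) d7
    exact DerL.mulR _ [sV] _ sV d8 (DerL.ax 1)
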